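/- Laplace noise calibrated to the utility loss of subsampling: let F^π be a property query on databases of size n whose entries are each independently positive with probability π (0 < π < 1), let m < n, λ = m/n, and choose the Laplace scale ψ > 0 such that the utility losses match, i.e. 2ψ² = π(1−π)·(1/m − 1/n). Then the Laplace mechanism LAP_ψ is (ε, 0)-statistically private with ε = 1/(ψn) = √(2/(π(1−π))) · √(λ/(n−m)). -/

import Mathlib

open MeasureTheory

open scoped ENNReal

lemma lap_meas (ψ : ℝ) :
    Measurable fun x : ℝ => ENNReal.ofReal (1 / (2 * ψ) * Real.exp (-|x| / ψ)) :=
  (continuous_const.mul ((continuous_abs.neg.div_const ψ).rexp)).measurable.ennreal_ofReal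

lemma lap_shift_le (ψ : ℝ) (hψ : 0 < ψ) (a b : ℝ) (S : Set ℝ) (hS : MeasurableSet S) :
    ((volume.withDensity fun x => ENNReal.ofReal (1 / (2 * ψ) * Real.exp (-|x| / ψ))).map
        (fun x => x + a)) S
      ≤ ENNReal.ofReal (Real.exp (|a - b| / ψ)) *
        ((volume.withDensity fun x => ENNReal.ofReal (1 / (2 * ψ) * Real.exp (-|x| / ψ))).map
          (fun x => x + b)) S := by
  set f : ℝ → ℝ≥0∞ := fun x => ENNReal.ofReal (1 / (2 * ψ) * Real.exp (-|x| / ψ)) with hf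
  have hfm : Measurable f := lap_meas ψ
  have hA : MeasurableSet ((fun x => x + a) ⁻¹' S) := hS.preimage (measurable_add_const a)
  have hB : MeasurableSet ((fun x => x + b) ⁻¹' S) := hS.preimage (measurable_add_const b)
  calc ((volume.withDensity f).map (fun x => x + a)) S
      = ∫⁻ x, ((fun x => x + a) ⁻¹' S).indicator f x := by
        rw [Measure.map_apply (measurable_add_const a) hS, withDensity_apply _ hA,
          lintegral_indicator hA]
    _ = ∫⁻ x, ((fun x => x + a) ⁻¹' S).indicator f (x + (b - a)) :=
        (lintegral_add_right_eq_self (((fun x => x + a) ⁻¹' S).indicator f) (b - a)).symm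
    _ ≤ ∫⁻ x, ENNReal.ofReal (Real.exp (|a - b| / ψ)) * ((fun x => x + b) ⁻¹' S).indicator f x := by
        refine lintegral_mono fun x => ?_
        have hmem : x + (b - a) ∈ (fun x => x + a) ⁻¹' S ↔ x ∈ (fun x => x + b) ⁻¹' S := by
          simp only [Set.mem_preimage]
          rw [show x + (b - a) + a = x + b by ring]
        by_cases h : x ∈ (fun x => x + b) ⁻¹' S
        · rw [Set.indicator_of_mem (hmem.mpr h), Set.indicator_of_mem h]
          rw [hf]
          rw [← ENNReal.ofReal_mul (Real.exp_nonneg _)]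
          apply ENNReal.ofReal_le_ofReal
          have habs : |x| ≤ |a - b| + |x + (b - a)| := by
            have := abs_add_le (x + (b - a)) (a - b)
            rw [show x + (b - a) + (a - b) = x by ring] at this
            linarith [this, abs_sub_comm a b]
          have hexp : Real.exp (-|x + (b - a)| / ψ) ≤
              Real.exp (|a - b| / ψ) * Real.exp (-|x| / ψ) := by
            rw [← Real.exp_add]
            apply Real.exp_le_exp.mpr
            rw [← add_div]
            gcongr
            linarith
          calc 1 / (2 * ψ) * Real.exp (-|x + (b - a)| / ψ)
              ≤ 1 / (2 * ψ) * (Real.exp (|a - b| / ψ) * Real.exp (-|x| / ψ)) := by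
                apply mul_le_mul_of_nonneg_left hexp (by positivity)
            _ = Real.exp (|a - b| / ψ) * (1 / (2 * ψ) * Real.exp (-|x| / ψ)) := by ring
        · rw [Set.indicator_of_notMem (fun hc => h (hmem.mp hc))]
          exact zero_le
    _ = ENNReal.ofReal (Real.exp (|a - b| / ψ)) * ∫⁻ x, ((fun x => x + b) ⁻¹' S).indicator f x :=
        lintegral_const_mul _ (hfm.indicator hB)
    _ = ENNReal.ofReal (Real.exp (|a - b| / ψ)) * ((volume.withDensity f).map (fun x => x + b)) S := by
        rw [Measure.map_apply (measurable_add_const b) hS, withDensity_apply _ hB,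
          lintegral_indicator hB]

/-- **Laplace noise calibrated to the utility loss of subsampling.**
Each entry of a database of size `n` is independently positive with probability `π`
(`0 < π < 1`) with respect to the property query `F^π`; conditioned on the critical entry,
the number of positive entries is `1 + Bin(n−1,π)` resp. `Bin(n−1,π)` and the Laplace
mechanism `LAP_ψ` releases the fraction plus Laplace noise of scale `ψ > 0`.  Let `m < n`,
`λ = m/n`, and choose `ψ` so that the utility losses match, i.e.
`2ψ² = π(1−π)·(1/m − 1/n)`.  Then `LAP_ψ` is `(ε, 0)`-statistically private with
`ε = 1/(ψn) = √(2/(π(1−π)))·√(λ/(n−m))`. -/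
theorem laplace_calibrated_to_subsampling
    (n m : ℕ) (hm : 0 < m) (hmn : m < n) (π ψ : ℝ)
    (hπ0 : 0 < π) (hπ1 : π < 1) (hψ : 0 < ψ)
    (hcal : 2 * ψ ^ 2 = π * (1 - π) * (1 / (m : ℝ) - 1 / (n : ℝ))) :
    let binom : Measure ℕ :=
      ((PMF.binomial (Real.toNNReal π)
          (show Real.toNNReal π ≤ 1 from Real.toNNReal_le_one.mpr hπ1.le) (n - 1)).map
        Fin.val).toMeasure
    let lap : Measure ℝ :=
      volume.withDensity fun x => ENNReal.ofReal (1 / (2 * ψ) * Real.exp (-|x| / ψ))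
    let μp : Measure ℝ := binom.bind fun j => lap.map fun x => x + ((j : ℝ) + 1) / n
    let μm : Measure ℝ := binom.bind fun j => lap.map fun x => x + (j : ℝ) / n
    (∀ S : Set ℝ, MeasurableSet S →
      (μp S).toReal ≤ Real.exp (1 / (ψ * n)) * (μm S).toReal
      ∧ (μm S).toReal ≤ Real.exp (1 / (ψ * n)) * (μp S).toReal)
    ∧ 1 / (ψ * n)
        = Real.sqrt (2 / (π * (1 - π))) * Real.sqrt (((m : ℝ) / n) / ((n : ℝ) - m)) := by
  intro binom lap μp μm
  have hn0 : (0:ℝ) < n := by exact_mod_cast hm.trans hmn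
  have hm0 : (0:ℝ) < m := by exact_mod_cast hm
  have hnm : (0:ℝ) < (n:ℝ) - m := by
    have : (m:ℝ) < n := by exact_mod_cast hmn
    linarith
  constructor
  · intro S hS
    set c : ℝ≥0∞ := ENNReal.ofReal (Real.exp (1 / (ψ * n))) with hc
    have hcne : c ≠ ∞ := ENNReal.ofReal_ne_top
    have habs : ∀ j : ℕ, |(((j : ℝ) + 1) / n) - ((j : ℝ) / n)| / ψ = 1 / (ψ * n) := by
      intro j
      rw [show (((j : ℝ) + 1) / n) - ((j : ℝ) / n) = 1 / n by field_simp; ring]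
      rw [abs_of_pos (by positivity)]
      field_simp
    have hmeasp : Measurable fun j : ℕ => lap.map fun x => x + ((j : ℝ) + 1) / n :=
      measurable_from_top
    have hmeasm : Measurable fun j : ℕ => lap.map fun x => x + (j : ℝ) / n :=
      measurable_from_top
    have hmS : Measurable fun j : ℕ => (lap.map fun x => x + ((j : ℝ) + 1) / n) S :=
      measurable_from_top
    have hmS' : Measurable fun j : ℕ => (lap.map fun x => x + (j : ℝ) / n) S :=
      measurable_from_top
    have h1 : μp S ≤ c * μm S := by
      rw [show μp = binom.bind fun j => lap.map fun x => x + ((j : ℝ) + 1) / n from rfl,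
        show μm = binom.bind fun j => lap.map fun x => x + (j : ℝ) / n from rfl,
        Measure.bind_apply hS hmeasp.aemeasurable,
        Measure.bind_apply hS hmeasm.aemeasurable, ← lintegral_const_mul _ hmS']
      refine lintegral_mono fun j => ?_
      have := lap_shift_le ψ hψ (((j : ℝ) + 1) / n) ((j : ℝ) / n) S hS
      rwa [habs j] at this
    have h2 : μm S ≤ c * μp S := by
      rw [show μp = binom.bind fun j => lap.map fun x => x + ((j : ℝ) + 1) / n from rfl,
        show μm = binom.bind fun j => lap.map fun x => x + (j : ℝ) / n from rfl,
        Measure.bind_apply hS hmeasp.aemeasurable,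
        Measure.bind_apply hS hmeasm.aemeasurable, ← lintegral_const_mul _ hmS]
      refine lintegral_mono fun j => ?_
      have := lap_shift_le ψ hψ ((j : ℝ) / n) (((j : ℝ) + 1) / n) S hS
      rwa [abs_sub_comm, habs j] at this
    by_cases hfin : μm S = ∞
    · have hp : μp S = ∞ := by
        by_contra hp
        have : c * μp S ≠ ∞ := ENNReal.mul_ne_top hcne hp
        rw [hfin] at h2
        exact this (top_le_iff.mp h2)
      simp [hfin, hp, Real.exp_nonneg]
    · have hpfin : μp S ≠ ∞ := by
        intro hp
        rw [hp] at h1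
        exact (ENNReal.mul_ne_top hcne hfin) (top_le_iff.mp h1)
      constructor
      · have := ENNReal.toReal_mono (ENNReal.mul_ne_top hcne hfin) h1
        rwa [ENNReal.toReal_mul, hc, ENNReal.toReal_ofReal (Real.exp_nonneg _)] at this
      · have := ENNReal.toReal_mono (ENNReal.mul_ne_top hcne hpfin) h2
        rwa [ENNReal.toReal_mul, hc, ENNReal.toReal_ofReal (Real.exp_nonneg _)] at this
  · have hππ : 0 < π * (1 - π) := by nlinarith
    have key : (1 / (ψ * n)) ^ 2 = (2 / (π * (1 - π))) * (((m : ℝ) / n) / ((n : ℝ) - m)) := by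
      have h3 : 2 * ψ ^ 2 * (m * n) = π * (1 - π) * ((n:ℝ) - m) := by
        rw [hcal]; field_simp
      have h1π : (1:ℝ) - π ≠ 0 := by linarith
      field_simp
      linear_combination (-1:ℝ) * h3
    rw [← Real.sqrt_mul (by positivity) _, ← key, Real.sqrt_sq (by positivity)]
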